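/- Let 0 < p ≤ 1. Define μ_0 = δ_1 (the Dirac measure at 1) and recursively μ_n = (μ_{n−1}).bind(κ_p) for n ≥ 1, i.e., μ_n(B) = ∫ κ_p(y)(B) dμ_{n−1}(y). Then for every positive integer n and every x with 0 < x < 1, μ_n((−∞, x]) = 1 − (1 − p·x)^n. -/

import Mathlib

open MeasureTheory

/-- The uniform probability distribution on the interval `(0, y)`. -/
noncomputable def unifIoo (y : ℝ) : Measure ℝ :=
  (ENNReal.ofReal y)⁻¹ • (volume.restrict (Set.Ioo 0 y))

/-- The one-step transition measure of the discrete-time Poisson hyperbolic staircase: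
the mixture `(p·y)·Unif(0,y) + (1 − p·y)·δ_y`. -/
noncomputable def kappa (p y : ℝ) : Measure ℝ :=
  ENNReal.ofReal (p * y) • unifIoo y + ENNReal.ofReal (1 - p * y) • Measure.dirac y

lemma unifIoo_apply (y : ℝ) (s : Set ℝ) :
    unifIoo y s = (ENNReal.ofReal y)⁻¹ * volume (s ∩ Set.Ioo 0 y) := by
  simp [unifIoo, Measure.restrict_apply' measurableSet_Ioo]

lemma kappa_apply (p y : ℝ) {s : Set ℝ} (hs : MeasurableSet s) :
    kappa p y s = ENNReal.ofReal (p * y) * unifIoo y s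
      + ENNReal.ofReal (1 - p * y) * s.indicator 1 y := by
  simp [kappa, Measure.dirac_apply' _ hs]

lemma measurable_kappa (p : ℝ) : Measurable (kappa p) := by
  apply Measure.measurable_of_measurable_coe
  intro s hs
  have h1 : (fun y => kappa p y s) = fun y =>
      ENNReal.ofReal (p * y) *
        ((ENNReal.ofReal y)⁻¹ * (volume.restrict (s ∩ Set.Ioi 0)) (Set.Iio y))
      + ENNReal.ofReal (1 - p * y) * s.indicator 1 y := by
    funext y
    have hset : s ∩ Set.Ioo 0 y = Set.Iio y ∩ (s ∩ Set.Ioi 0) := by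
      ext z
      simp only [Set.mem_inter_iff, Set.mem_Ioo, Set.mem_Iio, Set.mem_Ioi]
      tauto
    rw [kappa_apply p y hs, unifIoo_apply, hset,
      ← Measure.restrict_apply' (hs.inter measurableSet_Ioi)]
  rw [h1]
  have hmono : Monotone (fun y => (volume.restrict (s ∩ Set.Ioi 0)) (Set.Iio y)) :=
    fun a b hab => measure_mono (Set.Iio_subset_Iio hab)
  exact (((measurable_const.mul measurable_id).ennreal_ofReal).mul
      ((measurable_id.ennreal_ofReal.inv).mul hmono.measurable)).add
    (((measurable_const.sub (measurable_const.mul measurable_id)).ennreal_ofReal).mul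
      (measurable_one.indicator hs))

lemma kappa_Iic_of_le {p x y : ℝ} (hp : 0 ≤ p) (h0y : 0 < y) (hyx : y ≤ x)
    (hpy : p * y ≤ 1) : kappa p y (Set.Iic x) = 1 := by
  rw [kappa_apply p y measurableSet_Iic, unifIoo_apply]
  have h1 : Set.Iic x ∩ Set.Ioo 0 y = Set.Ioo 0 y := by
    apply Set.inter_eq_self_of_subset_right
    intro z hz
    exact le_trans (le_of_lt hz.2) hyx
  have h2 : y ∈ Set.Iic x := hyx
  rw [h1, Real.volume_Ioo, Set.indicator_of_mem h2]
  have hy' : (ENNReal.ofReal y) ≠ 0 := by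
    simp [ENNReal.ofReal_eq_zero, not_le, h0y]
  rw [sub_zero, ENNReal.inv_mul_cancel hy' ENNReal.ofReal_ne_top]
  have hpy0 : 0 ≤ p * y := mul_nonneg hp h0y.le
  simp only [Pi.one_apply, mul_one]
  rw [← ENNReal.ofReal_add hpy0 (by linarith)]
  norm_num

lemma kappa_Iic_of_gt {p x y : ℝ} (hp : 0 ≤ p) (h0x : 0 < x) (hxy : x < y) :
    kappa p y (Set.Iic x) = ENNReal.ofReal (p * x) := by
  rw [kappa_apply p y measurableSet_Iic, unifIoo_apply]
  have h1 : Set.Iic x ∩ Set.Ioo 0 y = Set.Ioc 0 x := by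
    ext z
    simp only [Set.mem_inter_iff, Set.mem_Iic, Set.mem_Ioo, Set.mem_Ioc]
    constructor
    · rintro ⟨h, h2, h3⟩; exact ⟨h2, h⟩
    · rintro ⟨h2, h3⟩; exact ⟨h3, h2, lt_of_le_of_lt h3 hxy⟩
  have h2 : y ∉ Set.Iic x := not_le.mpr hxy
  rw [h1, Real.volume_Ioc, Set.indicator_of_notMem h2, mul_zero, add_zero, sub_zero]
  have h0y : 0 < y := h0x.trans hxy
  have hy' : (ENNReal.ofReal y) ≠ 0 := by
    simp [ENNReal.ofReal_eq_zero, not_le, h0y]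
  rw [ENNReal.ofReal_mul hp, ENNReal.ofReal_mul hp, mul_assoc, ← mul_assoc (ENNReal.ofReal y),
    ENNReal.mul_inv_cancel hy' ENNReal.ofReal_ne_top, one_mul]

lemma kappa_Ioc_compl {p y : ℝ} (hp : 0 ≤ p) (hy : y ∈ Set.Ioc (0:ℝ) 1) :
    kappa p y (Set.Ioc (0:ℝ) 1)ᶜ = 0 := by
  rw [kappa_apply p y (measurableSet_Ioc.compl), unifIoo_apply]
  have h1 : (Set.Ioc (0:ℝ) 1)ᶜ ∩ Set.Ioo 0 y = ∅ := by
    apply Set.eq_empty_iff_forall_notMem.mpr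
    rintro z ⟨hzc, hz⟩
    exact hzc ⟨hz.1, hz.2.le.trans hy.2⟩
  rw [h1, Set.indicator_of_notMem (Set.notMem_compl_iff.mpr hy)]
  simp

lemma kappa_univ {p y : ℝ} (hp : 0 ≤ p) (h0y : 0 < y) (hpy : p * y ≤ 1) :
    kappa p y Set.univ = 1 := by
  rw [kappa_apply p y MeasurableSet.univ, unifIoo_apply, Set.univ_inter, Real.volume_Ioo]
  have hy' : (ENNReal.ofReal y) ≠ 0 := by
    simp [ENNReal.ofReal_eq_zero, not_le, h0y]
  rw [sub_zero, ENNReal.inv_mul_cancel hy' ENNReal.ofReal_ne_top]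
  have hpy0 : 0 ≤ p * y := mul_nonneg hp h0y.le
  rw [mul_one, Set.indicator_of_mem (Set.mem_univ y), Pi.one_apply, mul_one,
    ← ENNReal.ofReal_add hpy0 (by linarith)]
  norm_num

theorem stmt1 (p : ℝ) (hp : 0 < p) (hp1 : p ≤ 1)
    (μ : ℕ → Measure ℝ) (hμ0 : μ 0 = Measure.dirac 1)
    (hμ : ∀ n : ℕ, μ (n + 1) = (μ n).bind (kappa p)) :
    ∀ n : ℕ, 1 ≤ n → ∀ x : ℝ, 0 < x → x < 1 →
      μ n (Set.Iic x) = ENNReal.ofReal (1 - (1 - p * x) ^ n) := by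
  -- support and total-mass facts
  have hsupp : ∀ n : ℕ, μ n (Set.Ioc (0:ℝ) 1)ᶜ = 0 ∧ μ n Set.univ = 1 := by
    intro n
    induction n with
    | zero =>
      rw [hμ0]
      constructor
      · rw [Measure.dirac_apply' _ measurableSet_Ioc.compl]
        simp [Set.indicator_of_notMem]
      · simp
    | succ n ih =>
      have hae : ∀ᵐ y ∂μ n, y ∈ Set.Ioc (0:ℝ) 1 := by
        rw [ae_iff]
        convert ih.1 using 2
        rfl
      constructor
      · rw [hμ n, Measure.bind_apply measurableSet_Ioc.compl (measurable_kappa p).aemeasurable]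
        rw [lintegral_congr_ae (g := fun _ => 0)]
        · simp
        · filter_upwards [hae] with y hy
          exact kappa_Ioc_compl hp.le hy
      · rw [hμ n, Measure.bind_apply MeasurableSet.univ (measurable_kappa p).aemeasurable]
        rw [lintegral_congr_ae (g := fun _ => 1)]
        · simp [ih.2]
        · filter_upwards [hae] with y hy
          exact kappa_univ hp.le hy.1 (by nlinarith [hy.1, hy.2])
  have key : ∀ n : ℕ, ∀ x : ℝ, 0 < x → x < 1 →
      μ n (Set.Iic x) = ENNReal.ofReal (1 - (1 - p * x) ^ n) := by
    intro n
    induction n with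
    | zero =>
      intro x hx0 hx1
      rw [hμ0, Measure.dirac_apply' _ measurableSet_Iic]
      simp [Set.indicator_of_notMem (by simp [not_le]; linarith : (1:ℝ) ∉ Set.Iic x)]
    | succ n ih =>
      intro x hx0 hx1
      have hae : ∀ᵐ y ∂μ n, y ∈ Set.Ioc (0:ℝ) 1 := by
        rw [ae_iff]
        convert (hsupp n).1 using 2
        rfl
      have hpx1 : p * x < 1 := by nlinarith
      have hpx0 : 0 < p * x := mul_pos hp hx0
      have hc0 : (0:ℝ) ≤ 1 - p * x := by linarith
      have hc1 : (1:ℝ) - p * x ≤ 1 := by linarith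
      have hf0 : (0:ℝ) ≤ 1 - (1 - p * x) ^ n := by
        have := pow_le_one₀ (n := n) hc0 hc1
        linarith
      have hf1 : 1 - (1 - p * x) ^ n ≤ 1 := by
        have := pow_nonneg hc0 n
        linarith
      set f : ℝ := 1 - (1 - p * x) ^ n with hf
      rw [hμ n, Measure.bind_apply measurableSet_Iic (measurable_kappa p).aemeasurable]
      have hint : ∫⁻ y, kappa p y (Set.Iic x) ∂μ n =
          ∫⁻ y, ((Set.Iic x).indicator (fun _ => (1:ENNReal)) y
            + Set.indicator (Set.Iic x)ᶜ (fun _ => ENNReal.ofReal (p * x)) y) ∂μ n := by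
        apply lintegral_congr_ae
        filter_upwards [hae] with y hy
        by_cases hyx : y ≤ x
        · rw [kappa_Iic_of_le hp.le hy.1 hyx (by nlinarith [hy.1, hy.2])]
          simp [Set.indicator_apply, Set.mem_Iic, hyx]
        · push_neg at hyx
          rw [kappa_Iic_of_gt hp.le hx0 hyx]
          simp [Set.indicator_apply, Set.mem_Iic, hyx.not_ge, hyx]
      rw [hint, lintegral_add_left (measurable_const.indicator measurableSet_Iic)]
      rw [lintegral_indicator measurableSet_Iic,
        lintegral_indicator measurableSet_Iic.compl]
      simp only [lintegral_const, Measure.restrict_apply MeasurableSet.univ,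
        Set.univ_inter, one_mul]
      rw [ih x hx0 hx1]
      have hne : μ n (Set.Iic x) ≠ ⊤ := by
        rw [ih x hx0 hx1]; exact ENNReal.ofReal_ne_top
      have hmc : μ n (Set.Iic x)ᶜ = 1 - ENNReal.ofReal f := by
        rw [measure_compl measurableSet_Iic hne, (hsupp n).2, ih x hx0 hx1]
      rw [hmc]
      have h1f : (1:ENNReal) - ENNReal.ofReal f = ENNReal.ofReal (1 - f) := by
        rw [ENNReal.ofReal_sub _ hf0, ENNReal.ofReal_one]
      rw [h1f, ← ENNReal.ofReal_mul hpx0.le,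
        ← ENNReal.ofReal_add hf0 (mul_nonneg hpx0.le (by linarith))]
      congr 1
      rw [hf, pow_succ]
      ring
  intro n _ x hx0 hx1
  exact key n x hx0 hx1
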